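/- Let T_1, …, T_n be pairwise commuting bounded operators on a complex Hilbert space H. Then for every k ≥ 1: I_H − ∑_{α ∈ ℕ^n, |α| = k} γ_α T^α T^{*α} = ∑_{l=0}^{k−1} ∑_{β ∈ ℕ^n, |β| = l} γ_β T^β (I_H − ∑_{i=1}^n T_i T_i*) T^{*β}. -/

import Mathlib

open scoped InnerProductSpace

set_option maxHeartbeats 1000000
set_option synthInstance.maxHeartbeats 400000

noncomputable section

namespace RowContr

instance {n : ℕ} {H : Type*} [NormedAddCommGroup H] [CompleteSpace H] :
    CompleteSpace (PiLp 2 fun _ : Fin n => H) :=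
  inferInstance

/-- Ordered product `T^α = T 0 ^ α 0 ⬝ ⋯ ⬝ T (n-1) ^ α (n-1)`
(for commuting tuples the order is immaterial). -/
def mpow {n : ℕ} {H : Type*} [NormedAddCommGroup H] [InnerProductSpace ℂ H]
    (T : Fin n → H →L[ℂ] H) (α : Fin n → ℕ) : H →L[ℂ] H :=
  (List.ofFn fun i => (T i) ^ (α i)).prod

/-- The finset of all multi-indices `α : Fin n → ℕ` with `|α| = k`. -/
def multiIdx (n k : ℕ) : Finset (Fin n → ℕ) :=
  (Fintype.piFinset fun _ : Fin n => Finset.range (k + 1)).filter fun α => ∑ i, α i = k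

/-- The row operator `E^n → F` associated with a tuple of operators, acting on the
Hilbert direct sum `PiLp 2`. -/
def rowOp {n : ℕ} {E F : Type*} [NormedAddCommGroup E] [InnerProductSpace ℂ E]
    [NormedAddCommGroup F] [InnerProductSpace ℂ F]
    (T : Fin n → E →L[ℂ] F) : PiLp 2 (fun _ : Fin n => E) →L[ℂ] F :=
  ∑ i, (T i).comp (PiLp.proj 2 (fun _ : Fin n => E) i)

/-- The `α`-th Taylor coefficient of the characteristic function of `T`, where `Dstar`
plays the role of the defect operator `D_{T*}` and `D` the role of `D_T`:
`θ_{T,α} = ∑_{j : α_j ≥ 1} γ_{α-e_j} • D_{T*} T^{*(α-e_j)} P_j D_T`. -/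
def charCoeff {n : ℕ} {H : Type*} [NormedAddCommGroup H] [InnerProductSpace ℂ H]
    [CompleteSpace H] (T : Fin n → H →L[ℂ] H) (Dstar : H →L[ℂ] H)
    (D : PiLp 2 (fun _ : Fin n => H) →L[ℂ] PiLp 2 (fun _ : Fin n => H))
    (α : Fin n → ℕ) : PiLp 2 (fun _ : Fin n => H) →L[ℂ] H :=
  ∑ j ∈ Finset.univ.filter (fun j => 0 < α j),
    (Nat.multinomial Finset.univ (α - Pi.single j 1) : ℂ) •
      (Dstar ∘L (star (mpow T (α - Pi.single j 1))) ∘L (PiLp.proj 2 (fun _ : Fin n => H) j) ∘L D)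

/-- The closure of the span of `{T^α D_{T*} h : h ∈ H, |α| ≥ m}`. -/
def rangeSpanGE {n : ℕ} {H : Type*} [NormedAddCommGroup H] [InnerProductSpace ℂ H]
    (T : Fin n → H →L[ℂ] H) (Dstar : H →L[ℂ] H) (m : ℕ) : Submodule ℂ H :=
  (Submodule.span ℂ
    {x : H | ∃ (α : Fin n → ℕ) (h : H), m ≤ ∑ i, α i ∧ x = mpow T α (Dstar h)}).topologicalClosure

/-- The closure of the span of `{T^α D_{T*} h : h ∈ H, |α| = m}`. -/
def rangeSpanEQ {n : ℕ} {H : Type*} [NormedAddCommGroup H] [InnerProductSpace ℂ H]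
    (T : Fin n → H →L[ℂ] H) (Dstar : H →L[ℂ] H) (m : ℕ) : Submodule ℂ H :=
  (Submodule.span ℂ
    {x : H | ∃ (α : Fin n → ℕ) (h : H), ∑ i, α i = m ∧ x = mpow T α (Dstar h)}).topologicalClosure

/-- The closure of the span of `{T^α D_{T*} h : h ∈ H, α ∈ ℕ^n}`. -/
def rangeSpanAll {n : ℕ} {H : Type*} [NormedAddCommGroup H] [InnerProductSpace ℂ H]
    (T : Fin n → H →L[ℂ] H) (Dstar : H →L[ℂ] H) : Submodule ℂ H :=
  (Submodule.span ℂ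
    {x : H | ∃ (α : Fin n → ℕ) (h : H), x = mpow T α (Dstar h)}).topologicalClosure

/-- The set `H_c = {h ∈ H : ∑_{|α| = k} γ_α ‖T^{*α} h‖² = ‖h‖² for all k ∈ ℕ}`. -/
def Hc {n : ℕ} {H : Type*} [NormedAddCommGroup H] [InnerProductSpace ℂ H] [CompleteSpace H]
    (T : Fin n → H →L[ℂ] H) : Set H :=
  {h : H | ∀ k : ℕ, ∑ α ∈ multiIdx n k,
    (Nat.multinomial Finset.univ α : ℝ) * ‖star (mpow T α) h‖ ^ 2 = ‖h‖ ^ 2}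


section AuxLemmas

open Finset

section ListProd
variable {M : Type*} [Monoid M]

lemma ofFn_prod_mul_distrib : ∀ {n : ℕ} (f g : Fin n → M), (∀ i j, Commute (f i) (g j)) →
    (List.ofFn fun i => f i * g i).prod = (List.ofFn f).prod * (List.ofFn g).prod
  | 0, f, g, _ => by simp
  | (n+1), f, g, h => by
    simp only [List.ofFn_succ, List.prod_cons]
    rw [ofFn_prod_mul_distrib _ _ (fun i j => h _ _)]
    have hc : Commute (g 0) ((List.ofFn fun i => f i.succ).prod) :=
      Commute.list_prod_right _ _ (by
        intro x hx
        obtain ⟨i, rfl⟩ := List.mem_ofFn.mp hx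
        exact (h _ _).symm)
    rw [mul_assoc, mul_assoc, ← mul_assoc (g 0), hc.eq, mul_assoc]

lemma ofFn_prod_eq_single : ∀ {n : ℕ} (f : Fin n → M) (j : Fin n),
    (∀ i, i ≠ j → f i = 1) → (List.ofFn f).prod = f j
  | 0, _, j, _ => j.elim0
  | (n+1), f, j, h => by
    simp only [List.ofFn_succ, List.prod_cons]
    rcases Fin.eq_zero_or_eq_succ j with rfl | ⟨j', rfl⟩
    · have : (List.ofFn fun i : Fin n => f i.succ).prod = 1 := by
        apply List.prod_eq_one
        intro x hx
        obtain ⟨i, rfl⟩ := List.mem_ofFn.mp hx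
        exact h _ (Fin.succ_ne_zero i)
      rw [this, mul_one]
    · rw [h 0 (Fin.succ_ne_zero j').symm, one_mul,
        ofFn_prod_eq_single _ j' (fun i hi => h _ (by simpa using hi))]

end ListProd

section Multinomial
open Nat

lemma multinomial_step' {n : ℕ} (α : Fin n → ℕ) (j : Fin n) (hj : 0 < α j) :
    α j * Nat.multinomial Finset.univ α =
      (∑ i, α i) * Nat.multinomial Finset.univ (α - Pi.single j 1) := by
  set β := α - Pi.single j 1 with hβdef
  have hβj : β j = α j - 1 := by simp [hβdef]
  have hβi : ∀ i, i ≠ j → β i = α i := fun i hi => by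
    simp [hβdef, Pi.single_apply, hi]
  have herase : ∏ i ∈ univ.erase j, (α i)! = ∏ i ∈ univ.erase j, (β i)! :=
    Finset.prod_congr rfl fun i hi => by rw [hβi i (Finset.mem_erase.mp hi).1]
  have hsum : ∑ i, α i = (∑ i, β i) + 1 := by
    have h1 : α j + ∑ i ∈ univ.erase j, α i = ∑ i, α i :=
      Finset.add_sum_erase _ α (Finset.mem_univ j)
    have h2 : β j + ∑ i ∈ univ.erase j, β i = ∑ i, β i :=
      Finset.add_sum_erase _ β (Finset.mem_univ j)
    have h3 : ∑ i ∈ univ.erase j, α i = ∑ i ∈ univ.erase j, β i :=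
      Finset.sum_congr rfl fun i hi => (hβi i (Finset.mem_erase.mp hi).1).symm
    omega
  have hprod : ∏ i, (α i)! = α j * ∏ i, (β i)! := by
    rw [← Finset.mul_prod_erase _ _ (Finset.mem_univ j),
        ← Finset.mul_prod_erase _ (fun i => (β i)!) (Finset.mem_univ j), herase,
        ← mul_assoc]
    congr 1
    rw [hβj]
    rcases Nat.exists_eq_add_of_lt hj with ⟨m, hm⟩
    simp [show α j = m + 1 by omega, Nat.factorial_succ]
  have hpos : 0 < ∏ i, (β i)! := Finset.prod_pos fun i _ => Nat.factorial_pos _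
  apply Nat.eq_of_mul_eq_mul_left hpos
  calc (∏ i, (β i)!) * (α j * Nat.multinomial Finset.univ α)
      = (∏ i, (α i)!) * Nat.multinomial Finset.univ α := by rw [hprod]; ring
    _ = (∑ i, α i)! := Nat.multinomial_spec _ _
    _ = ((∑ i, β i) + 1)! := by rw [hsum]
    _ = ((∑ i, β i) + 1) * ((∏ i, (β i)!) * Nat.multinomial Finset.univ β) := by
        rw [Nat.multinomial_spec, Nat.factorial_succ]
    _ = (∏ i, (β i)!) * ((∑ i, α i) * Nat.multinomial Finset.univ β) := by rw [hsum]; ring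

lemma multinomial_pascal' {n k : ℕ} (α : Fin n → ℕ) (h : ∑ i, α i = k + 1) :
    Nat.multinomial Finset.univ α =
      ∑ j ∈ Finset.univ.filter (fun j => 0 < α j),
        Nat.multinomial Finset.univ (α - Pi.single j 1) := by
  apply Nat.eq_of_mul_eq_mul_left (show 0 < k + 1 by omega)
  calc (k + 1) * Nat.multinomial Finset.univ α
      = ∑ j, α j * Nat.multinomial Finset.univ α := by rw [← Finset.sum_mul, h]
    _ = ∑ j ∈ Finset.univ.filter (fun j => 0 < α j), α j * Nat.multinomial Finset.univ α := by
        rw [Finset.sum_filter_of_ne]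
        intro x _ hx
        by_contra hc
        simp only [not_lt, Nat.le_zero] at hc
        simp [hc] at hx
    _ = ∑ j ∈ Finset.univ.filter (fun j => 0 < α j),
          (k + 1) * Nat.multinomial Finset.univ (α - Pi.single j 1) := by
        refine Finset.sum_congr rfl fun j hj => ?_
        have := multinomial_step' α j (Finset.mem_filter.mp hj).2
        rwa [h] at this
    _ = (k + 1) * ∑ j ∈ Finset.univ.filter (fun j => 0 < α j),
          Nat.multinomial Finset.univ (α - Pi.single j 1) := by rw [Finset.mul_sum]

lemma multinomial_zero_fun {n : ℕ} : Nat.multinomial (Finset.univ : Finset (Fin n)) 0 = 1 := by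
  have := Nat.multinomial_spec (Finset.univ : Finset (Fin n)) 0
  simpa using this

end Multinomial

variable {n : ℕ} {H : Type*} [NormedAddCommGroup H] [InnerProductSpace ℂ H]

lemma mpow_zero' (T : Fin n → H →L[ℂ] H) : mpow T 0 = 1 := by
  unfold mpow
  simp only [Pi.zero_apply, pow_zero]
  simp [List.ofFn_const]

lemma mpow_add' (T : Fin n → H →L[ℂ] H) (hcomm : ∀ i j, Commute (T i) (T j))
    (α β : Fin n → ℕ) : mpow T (α + β) = mpow T α * mpow T β := by
  unfold mpow
  simp only [Pi.add_apply, pow_add]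
  exact ofFn_prod_mul_distrib _ _ fun i j => (hcomm i j).pow_pow _ _

lemma mpow_single' (T : Fin n → H →L[ℂ] H) (j : Fin n) : mpow T (Pi.single j 1) = T j := by
  unfold mpow
  rw [ofFn_prod_eq_single _ j (fun i hi => by simp [Pi.single_apply, hi])]
  simp

lemma mpow_succ' (T : Fin n → H →L[ℂ] H) (hcomm : ∀ i j, Commute (T i) (T j))
    (β : Fin n → ℕ) (j : Fin n) : mpow T (β + Pi.single j 1) = mpow T β * T j := by
  rw [mpow_add' T hcomm, mpow_single']

lemma mem_multiIdx' {k : ℕ} {α : Fin n → ℕ} : α ∈ multiIdx n k ↔ ∑ i, α i = k := by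
  unfold multiIdx
  simp only [Finset.mem_filter, Fintype.mem_piFinset, Finset.mem_range, and_iff_right_iff_imp]
  intro h i
  have : α i ≤ k := h ▸ Finset.single_le_sum (fun _ _ => Nat.zero_le _) (Finset.mem_univ i)
  omega

lemma multiIdx_zero' : multiIdx n 0 = {(0 : Fin n → ℕ)} := by
  ext α
  simp [mem_multiIdx', Finset.sum_eq_zero_iff, funext_iff, Finset.mem_singleton]

variable [CompleteSpace H]

lemma key_step (T : Fin n → H →L[ℂ] H) (hcomm : ∀ i j, Commute (T i) (T j)) (k : ℕ) :
    ∑ α ∈ multiIdx n (k + 1),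
        (Nat.multinomial Finset.univ α : ℂ) • (mpow T α * star (mpow T α))
      = ∑ β ∈ multiIdx n k,
          (Nat.multinomial Finset.univ β : ℂ) •
            (mpow T β * (∑ i, T i * star (T i)) * star (mpow T β)) := by
  have hsum_single : ∀ j : Fin n, ∑ i, Pi.single j (1 : ℕ) i = 1 := fun j =>
    Fintype.sum_pi_single' j 1
  have hsub_add : ∀ (α : Fin n → ℕ) (j : Fin n), 0 < α j →
      (α - Pi.single j 1) + Pi.single j 1 = α := by
    intro α j hj
    funext i
    by_cases hij : i = j
    · subst hij; simp [Pi.single_apply]; omega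
    · simp [Pi.single_apply, hij]
  have hadd_sub : ∀ (β : Fin n → ℕ) (j : Fin n), (β + Pi.single j 1) - Pi.single j 1 = β := by
    intro β j
    funext i
    by_cases hij : i = j
    · subst hij; simp
    · simp [Pi.single_apply, hij]
  calc
    ∑ α ∈ multiIdx n (k + 1),
        (Nat.multinomial Finset.univ α : ℂ) • (mpow T α * star (mpow T α))
      = ∑ α ∈ multiIdx n (k + 1), ∑ j ∈ Finset.univ.filter (fun j => 0 < α j),
          (Nat.multinomial Finset.univ (α - Pi.single j 1) : ℂ) •
            (mpow T α * star (mpow T α)) := by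
        refine Finset.sum_congr rfl fun α hα => ?_
        rw [multinomial_pascal' α (mem_multiIdx'.mp hα)]
        push_cast
        rw [Finset.sum_smul]
    _ = ∑ x ∈ (multiIdx n (k + 1)).sigma (fun α => Finset.univ.filter (fun j => 0 < α j)),
          (Nat.multinomial Finset.univ (x.1 - Pi.single x.2 1) : ℂ) •
            (mpow T x.1 * star (mpow T x.1)) := Finset.sum_sigma' _ _ _
    _ = ∑ y ∈ (multiIdx n k).sigma (fun _ => (Finset.univ : Finset (Fin n))),
          (Nat.multinomial Finset.univ y.1 : ℂ) •
            (mpow T (y.1 + Pi.single y.2 1) * star (mpow T (y.1 + Pi.single y.2 1))) := by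
        refine Finset.sum_nbij' (fun x => ⟨x.1 - Pi.single x.2 1, x.2⟩)
          (fun y => ⟨y.1 + Pi.single y.2 1, y.2⟩) ?_ ?_ ?_ ?_ ?_
        · rintro ⟨α, j⟩ hx
          simp only [Finset.mem_sigma, Finset.mem_filter, Finset.mem_univ, true_and] at hx ⊢
          obtain ⟨hα, hj⟩ := hx
          refine ⟨mem_multiIdx'.mpr ?_, trivial⟩
          have h1 := congrArg (fun f => ∑ i, f i) (hsub_add α j hj)
          simp only [Pi.add_apply, Finset.sum_add_distrib, hsum_single] at h1
          have h2 := mem_multiIdx'.mp hα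
          omega
        · rintro ⟨β, j⟩ hy
          simp only [Finset.mem_sigma, Finset.mem_filter, Finset.mem_univ, true_and] at hy ⊢
          constructor
          · refine mem_multiIdx'.mpr ?_
            have h2 := mem_multiIdx'.mp hy.1
            simp only [Pi.add_apply, Finset.sum_add_distrib, hsum_single]
            omega
          · simp
        · rintro ⟨α, j⟩ hx
          simp only [Finset.mem_sigma, Finset.mem_filter, Finset.mem_univ, true_and] at hx
          simp [hsub_add α j hx.2]
        · rintro ⟨β, j⟩ _
          simp [hadd_sub β j]
        · rintro ⟨α, j⟩ hx
          simp only [Finset.mem_sigma, Finset.mem_filter, Finset.mem_univ, true_and] at hx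
          rw [hsub_add α j hx.2]
    _ = ∑ β ∈ multiIdx n k, ∑ j : Fin n,
          (Nat.multinomial Finset.univ β : ℂ) •
            (mpow T (β + Pi.single j 1) * star (mpow T (β + Pi.single j 1))) :=
        Finset.sum_sigma _ _ _
    _ = ∑ β ∈ multiIdx n k,
          (Nat.multinomial Finset.univ β : ℂ) •
            (mpow T β * (∑ i, T i * star (T i)) * star (mpow T β)) := by
        refine Finset.sum_congr rfl fun β _ => ?_
        rw [← Finset.smul_sum]
        congr 1
        rw [Finset.mul_sum, Finset.sum_mul]
        refine Finset.sum_congr rfl fun j _ => ?_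
        rw [mpow_succ' T hcomm, star_mul]
        simp only [mul_assoc]

end AuxLemmas

theorem statement_9 {n : ℕ} {H : Type*} [NormedAddCommGroup H] [InnerProductSpace ℂ H]
    [CompleteSpace H]
    (T : Fin n → H →L[ℂ] H)
    (hcomm : ∀ i j, Commute (T i) (T j)) :
    ∀ k : ℕ, 1 ≤ k →
      (1 : H →L[ℂ] H) - ∑ α ∈ multiIdx n k,
          (Nat.multinomial Finset.univ α : ℂ) • (mpow T α ∘L star (mpow T α))
        = ∑ l ∈ Finset.range k, ∑ β ∈ multiIdx n l,
            (Nat.multinomial Finset.univ β : ℂ) •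
              (mpow T β ∘L ((1 : H →L[ℂ] H) - ∑ i, T i ∘L star (T i)) ∘L star (mpow T β)) := by
  have main : ∀ k : ℕ,
      (1 : H →L[ℂ] H) - ∑ α ∈ multiIdx n k,
          (Nat.multinomial Finset.univ α : ℂ) • (mpow T α ∘L star (mpow T α))
        = ∑ l ∈ Finset.range k, ∑ β ∈ multiIdx n l,
            (Nat.multinomial Finset.univ β : ℂ) •
              (mpow T β ∘L ((1 : H →L[ℂ] H) - ∑ i, T i ∘L star (T i)) ∘L star (mpow T β)) := by
    intro k
    induction k with
    | zero =>
      rw [Finset.range_zero, Finset.sum_empty, multiIdx_zero']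
      simp only [Finset.sum_singleton, mpow_zero', multinomial_zero_fun, star_one,
        Nat.cast_one, one_smul, ← ContinuousLinearMap.mul_def, mul_one, sub_self]
    | succ k ih =>
      rw [Finset.sum_range_succ, ← ih]
      simp only [← ContinuousLinearMap.mul_def]
      have expand : ∑ β ∈ multiIdx n k,
          (Nat.multinomial Finset.univ β : ℂ) •
            (mpow T β * (((1 : H →L[ℂ] H) - ∑ i, T i * star (T i)) * star (mpow T β)))
          = (∑ β ∈ multiIdx n k,
              (Nat.multinomial Finset.univ β : ℂ) • (mpow T β * star (mpow T β)))
            - ∑ β ∈ multiIdx n k,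
              (Nat.multinomial Finset.univ β : ℂ) •
                (mpow T β * (∑ i, T i * star (T i)) * star (mpow T β)) := by
        rw [← Finset.sum_sub_distrib]
        refine Finset.sum_congr rfl fun β _ => ?_
        rw [← smul_sub]
        congr 1
        rw [sub_mul, one_mul, mul_sub, ← mul_assoc]
      rw [expand, ← key_step T hcomm k]
      abel
  intro k _
  exact main k

end RowContr
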